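/- Let (a,b) ∈ ℝ² and c ∈ ℝ. There exists a future-directed causal Lipschitz curve γ : [0,1] → ℝ² with γ(0) = (0,0), γ(1) = (a,b) and signed area A(γ) = c if and only if a > 0 and −a² + b² + 4|c| ≤ 0. -/

import Mathlib

set_option maxHeartbeats 1000000


open MeasureTheory Set Filter Topology
open scoped Interval

lemma abs_deriv_le_of_lip {F : ℝ → ℝ} {K : NNReal} (hF : LipschitzWith K F) (t : ℝ) :
    |deriv F t| ≤ K := by
  by_cases h : DifferentiableAt ℝ F t
  · have hs : Tendsto (slope F t) (𝓝[≠] t) (𝓝 (deriv F t)) :=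
      hasDerivAt_iff_tendsto_slope.1 h.hasDerivAt
    have habs : Tendsto (fun z => |slope F t z|) (𝓝[≠] t) (𝓝 |deriv F t|) := hs.abs
    refine le_of_tendsto habs (Filter.Eventually.of_forall fun z => ?_)
    rcases eq_or_ne z t with rfl | hz
    · simp [slope_same]
    · rw [slope_def_field, abs_div]
      rw [div_le_iff₀ (abs_pos.2 (sub_ne_zero.2 hz))]
      have := hF.dist_le_mul z t
      simpa [Real.dist_eq] using this
  · rw [deriv_zero_of_not_differentiableAt h]; simp

lemma tendsto_seq_nhdsNE (z : ℝ) :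
    Tendsto (fun n : ℕ => z + ((n:ℝ)+1)⁻¹) atTop (𝓝[≠] z) := by
  rw [tendsto_nhdsWithin_iff]
  constructor
  · have h0 : Tendsto (fun n : ℕ => ((n:ℝ)+1)⁻¹) atTop (𝓝 0) := by
      exact tendsto_one_div_add_atTop_nhds_zero_nat.congr (by intro n; rw [one_div])
    simpa using (tendsto_const_nhds.add h0)
  · refine Filter.Eventually.of_forall fun n => ?_
    have : (0:ℝ) < ((n:ℝ)+1)⁻¹ := by positivity
    simp only [mem_compl_iff, mem_singleton_iff]
    intro h
    nlinarith [this, h]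

lemma tendsto_avg {F : ℝ → ℝ} (hF : Continuous F) (z : ℝ) :
    Tendsto (fun n : ℕ => (∫ t in z..(z + ((n:ℝ)+1)⁻¹), F t) * ((n:ℝ)+1)) atTop (𝓝 (F z)) := by
  have hG : HasDerivAt (fun x => ∫ t in z..x, F t) (F z) z :=
    (hF.integral_hasStrictDerivAt z z).hasDerivAt
  have hs : Tendsto (slope (fun x => ∫ t in z..x, F t) z) (𝓝[≠] z) (𝓝 (F z)) :=
    hasDerivAt_iff_tendsto_slope.1 hG
  have := hs.comp (tendsto_seq_nhdsNE z)
  refine this.congr fun n => ?_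
  have hne : (((n:ℝ)+1))⁻¹ ≠ 0 := by positivity
  simp [Function.comp, slope_def_field, intervalIntegral.integral_same, div_eq_mul_inv, inv_inv]

lemma lip_ftc {F : ℝ → ℝ} {K : NNReal} (hF : LipschitzWith K F) {x y : ℝ} (hxy : x ≤ y) :
    ∫ t in x..y, deriv F t = F y - F x := by
  have hFc : Continuous F := hF.continuous
  set g : ℕ → ℝ → ℝ := fun n t => (F (t + ((n:ℝ)+1)⁻¹) - F t) * ((n:ℝ)+1) with hg
  -- a.e. convergence
  have hdiff := hF.ae_differentiableAt (μ := volume)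
  have hconv : ∀ᵐ t ∂(volume.restrict (Icc x y)),
      Tendsto (fun n => g n t) atTop (𝓝 (deriv F t)) := by
    refine ae_restrict_of_ae (hdiff.mono fun t ht => ?_)
    have hs : Tendsto (slope F t) (𝓝[≠] t) (𝓝 (deriv F t)) :=
      hasDerivAt_iff_tendsto_slope.1 ht.hasDerivAt
    refine (hs.comp (tendsto_seq_nhdsNE t)).congr fun n => ?_
    have hne : (((n:ℝ)+1))⁻¹ ≠ 0 := by positivity
    simp [hg, Function.comp, slope_def_field, div_eq_mul_inv, inv_inv]
  have hbound : ∀ n, ∀ᵐ t ∂(volume.restrict (Icc x y)), ‖g n t‖ ≤ (K:ℝ) := by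
    intro n
    refine Filter.Eventually.of_forall fun t => ?_
    have h1 : |F (t + ((n:ℝ)+1)⁻¹) - F t| ≤ (K:ℝ) * ((n:ℝ)+1)⁻¹ := by
      have := hF.dist_le_mul (t + ((n:ℝ)+1)⁻¹) t
      simpa [Real.dist_eq, abs_of_nonneg (by positivity : (0:ℝ) ≤ ((n:ℝ)+1)), abs_of_nonneg (by positivity : (0:ℝ) ≤ ((n:ℝ)+1)⁻¹)] using this
    have h2 : (0:ℝ) < (n:ℝ)+1 := by positivity
    rw [Real.norm_eq_abs, abs_mul, abs_of_nonneg h2.le]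
    calc |F (t + ((n:ℝ)+1)⁻¹) - F t| * ((n:ℝ)+1) ≤ ((K:ℝ) * ((n:ℝ)+1)⁻¹) * ((n:ℝ)+1) := by
          exact mul_le_mul_of_nonneg_right h1 h2.le
      _ = (K:ℝ) := by field_simp
  have hmeas : ∀ n, AEStronglyMeasurable (g n) (volume.restrict (Icc x y)) :=
    fun n => (((hFc.comp (continuous_id.add continuous_const)).sub hFc).mul
      continuous_const).aestronglyMeasurable
  have hDCT := MeasureTheory.tendsto_integral_of_dominated_convergence
    (fun _ => (K:ℝ)) hmeas (integrable_const _) hbound hconv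
  -- compute ∫ g n
  have hInt : ∀ n, ∫ t in Icc x y, g n t =
      ((∫ t in y..(y + ((n:ℝ)+1)⁻¹), F t) * ((n:ℝ)+1)) -
      ((∫ t in x..(x + ((n:ℝ)+1)⁻¹), F t) * ((n:ℝ)+1)) := by
    intro n
    set d : ℝ := ((n:ℝ)+1)⁻¹ with hd
    have hd0 : 0 < d := by positivity
    have hIcc : ∫ t in Icc x y, g n t = ∫ t in x..y, g n t := by
      rw [intervalIntegral.integral_of_le hxy, MeasureTheory.integral_Icc_eq_integral_Ioc]
    have i1 : IntervalIntegrable (fun t => F (t + d)) volume x y :=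
      (hFc.comp (continuous_id.add continuous_const)).intervalIntegrable _ _
    have i2 : IntervalIntegrable F volume x y := hFc.intervalIntegrable _ _
    rw [hIcc]
    have : ∫ t in x..y, g n t = ((∫ t in x..y, F (t + d)) - ∫ t in x..y, F t) * ((n:ℝ)+1) := by
      rw [← intervalIntegral.integral_sub i1 i2, ← intervalIntegral.integral_mul_const]
    rw [this, intervalIntegral.integral_comp_add_right]
    have hsplit1 : ∫ t in x..(y+d), F t = (∫ t in x..y, F t) + ∫ t in y..(y+d), F t :=
      (intervalIntegral.integral_add_adjacent_intervals (hFc.intervalIntegrable _ _)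
        (hFc.intervalIntegrable _ _)).symm
    have hsplit2 : ∫ t in (x+d)..(y+d), F t = (∫ t in x..(y+d), F t) - ∫ t in x..(x+d), F t := by
      rw [← intervalIntegral.integral_interval_sub_left (hFc.intervalIntegrable _ _)
        (hFc.intervalIntegrable _ _)]
    rw [hsplit2, hsplit1]
    ring
  have hlim2 : Tendsto (fun n => ∫ t in Icc x y, g n t) atTop (𝓝 (F y - F x)) := by
    simp only [hInt]
    exact (tendsto_avg hFc y).sub (tendsto_avg hFc x)
  have := tendsto_nhds_unique hDCT hlim2
  rw [intervalIntegral.integral_of_le hxy, ← MeasureTheory.integral_Icc_eq_integral_Ioc]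
  exact this

/-- A curve in the Minkowski plane is future-directed causal if, for almost every
`t ∈ [0,1]`, its first derivative dominates the absolute value of its second
derivative and is positive. -/
def IsFDCausal (γ : ℝ → ℝ × ℝ) : Prop :=
  ∀ᵐ t ∂(volume.restrict (Icc (0:ℝ) 1)),
    |deriv (fun s => (γ s).2) t| ≤ deriv (fun s => (γ s).1) t ∧
      0 < deriv (fun s => (γ s).1) t

/-- `γ` is Lipschitz on `[0,1]`. -/
def IsLipCurve (γ : ℝ → ℝ × ℝ) : Prop :=
  ∃ K, LipschitzOnWith K γ (Icc (0:ℝ) 1)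

/-- The signed area enclosed by `γ` and the segment joining its endpoints. -/
noncomputable def signedArea (γ : ℝ → ℝ × ℝ) : ℝ :=
  (1/2) * ∫ t in (0:ℝ)..1,
    ((γ t).1 * deriv (fun s => (γ s).2) t - deriv (fun s => (γ s).1) t * (γ t).2)


lemma intervalIntegrable_of_bound {f : ℝ → ℝ} {x y C : ℝ} (hxy : x ≤ y)
    (hm : AEStronglyMeasurable f (volume.restrict (Ioc x y)))
    (hb : ∀ᵐ t ∂(volume.restrict (Ioc x y)), |f t| ≤ C) :
    IntervalIntegrable f volume x y := by
  rw [intervalIntegrable_iff_integrableOn_Ioc_of_le hxy]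
  exact Integrable.mono' (integrable_const C) hm (by simpa [Real.norm_eq_abs] using hb)

lemma forward_dir {a b c : ℝ} {γ : ℝ → ℝ × ℝ} (hLip : IsLipCurve γ) (hC : IsFDCausal γ)
    (h0 : γ 0 = (0,0)) (h1 : γ 1 = (a,b)) (hA : signedArea γ = c) :
    0 < a ∧ -a^2 + b^2 + 4 * |c| ≤ 0 := by
  obtain ⟨K, hK⟩ := hLip
  have hxl : LipschitzOnWith (1 * K) (fun t => (γ t).1) (Icc (0:ℝ) 1) :=
    LipschitzWith.comp_lipschitzOnWith LipschitzWith.prod_fst hK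
  have hyl : LipschitzOnWith (1 * K) (fun t => (γ t).2) (Icc (0:ℝ) 1) :=
    LipschitzWith.comp_lipschitzOnWith LipschitzWith.prod_snd hK
  obtain ⟨X, hX, hXeq⟩ := hxl.extend_real
  obtain ⟨Y, hY, hYeq⟩ := hyl.extend_real
  have hX0 : X 0 = 0 := by
    have := hXeq (left_mem_Icc.2 zero_le_one); rw [← this]; simp [h0]
  have hX1 : X 1 = a := by
    have := hXeq (right_mem_Icc.2 zero_le_one); rw [← this]; simp [h1]
  have hY0 : Y 0 = 0 := by
    have := hYeq (left_mem_Icc.2 zero_le_one); rw [← this]; simp [h0]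
  have hY1 : Y 1 = b := by
    have := hYeq (right_mem_Icc.2 zero_le_one); rw [← this]; simp [h1]
  -- derivative agreement in the interior
  have hder : ∀ t ∈ Ioo (0:ℝ) 1, deriv X t = deriv (fun s => (γ s).1) t ∧
      deriv Y t = deriv (fun s => (γ s).2) t := by
    intro t ht
    have hmem : Icc (0:ℝ) 1 ∈ 𝓝 t := Icc_mem_nhds ht.1 ht.2
    constructor
    · exact Filter.EventuallyEq.deriv_eq
        (Filter.eventuallyEq_of_mem hmem fun s hs => (hXeq hs).symm)
    · exact Filter.EventuallyEq.deriv_eq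
        (Filter.eventuallyEq_of_mem hmem fun s hs => (hYeq hs).symm)
  have hrest : volume.restrict (Icc (0:ℝ) 1) = volume.restrict (Ioo (0:ℝ) 1) :=
    (Measure.restrict_congr_set Ioo_ae_eq_Icc).symm
  have hcaus : ∀ᵐ t ∂(volume.restrict (Icc (0:ℝ) 1)),
      |deriv Y t| ≤ deriv X t ∧ 0 < deriv X t := by
    have hIoo : ∀ᵐ t ∂(volume.restrict (Icc (0:ℝ) 1)), t ∈ Ioo (0:ℝ) 1 := by
      rw [hrest]; exact ae_restrict_mem measurableSet_Ioo
    filter_upwards [hC, hIoo] with t h1t h2t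
    rw [(hder t h2t).1, (hder t h2t).2]; exact h1t
  -- derivative bounds and integrability
  have hXb : ∀ t, |deriv X t| ≤ ((1*K : NNReal) : ℝ) := abs_deriv_le_of_lip hX
  have hYb : ∀ t, |deriv Y t| ≤ ((1*K : NNReal) : ℝ) := abs_deriv_le_of_lip hY
  have hXm : Measurable (deriv X) := measurable_deriv X
  have hYm : Measurable (deriv Y) := measurable_deriv Y
  have hIX : ∀ x y : ℝ, x ≤ y → IntervalIntegrable (deriv X) volume x y := fun x y hxy =>
    intervalIntegrable_of_bound hxy hXm.aestronglyMeasurable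
      (Filter.Eventually.of_forall fun t => hXb t)
  have hIY : ∀ x y : ℝ, x ≤ y → IntervalIntegrable (deriv Y) volume x y := fun x y hxy =>
    intervalIntegrable_of_bound hxy hYm.aestronglyMeasurable
      (Filter.Eventually.of_forall fun t => hYb t)
  -- monotone-type bound
  have hmono : ∀ s t : ℝ, 0 ≤ s → s ≤ t → t ≤ 1 → |Y t - Y s| ≤ X t - X s := by
    intro s t h0s hst ht1
    have hYft : Y t - Y s = ∫ u in s..t, deriv Y u := (lip_ftc hY hst).symm
    have hXft : X t - X s = ∫ u in s..t, deriv X u := (lip_ftc hX hst).symm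
    rw [hYft, hXft]
    calc |∫ u in s..t, deriv Y u| ≤ ∫ u in s..t, |deriv Y u| :=
          intervalIntegral.abs_integral_le_integral_abs hst
      _ ≤ ∫ u in s..t, deriv X u := by
          refine intervalIntegral.integral_mono_ae_restrict hst
            ((hIY s t hst).abs) (hIX s t hst) ?_
          have := ae_restrict_of_ae_restrict_of_subset
            (Icc_subset_Icc h0s ht1) hcaus
          exact this.mono fun u hu => hu.1
  -- pointwise bounds on [0,1]
  have hbnd : ∀ t ∈ Icc (0:ℝ) 1, 0 ≤ X t - Y t ∧ X t - Y t ≤ a - b ∧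
      0 ≤ X t + Y t ∧ X t + Y t ≤ a + b := by
    intro t ht
    have h1' := hmono 0 t le_rfl ht.1 ht.2
    have h2' := hmono t 1 ht.1 ht.2 le_rfl
    rw [hX0, hY0, sub_zero, sub_zero] at h1'
    rw [hX1, hY1] at h2'
    have e1 := abs_le.1 h1'
    have e2 := abs_le.1 h2'
    refine ⟨by linarith [e1.2], by linarith [e2.1], by linarith [e1.1], by linarith [e2.2]⟩
  -- a > 0
  have hXa : ∫ t in (0:ℝ)..1, deriv X t = a := by rw [lip_ftc hX zero_le_one, hX1, hX0, sub_zero]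
  have hapos : 0 < a := by
    have h0le : (0:ℝ) ≤ a := by
      rw [← hXa]
      have h' : (∫ t in (0:ℝ)..1, (0:ℝ)) ≤ ∫ t in (0:ℝ)..1, deriv X t := by
        refine intervalIntegral.integral_mono_ae_restrict zero_le_one
          (intervalIntegrable_const) (hIX 0 1 zero_le_one) ?_
        exact hcaus.mono fun t ht => ht.2.le
      simpa using h'
    rcases h0le.lt_or_eq with h | h
    · exact h
    · exfalso
      have hIoc : ∫ t in Ioc (0:ℝ) 1, deriv X t = a := by
        rw [← hXa, intervalIntegral.integral_of_le zero_le_one]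
      have hnn : 0 ≤ᵐ[volume.restrict (Ioc (0:ℝ) 1)] deriv X := by
        have := ae_restrict_of_ae_restrict_of_subset Ioc_subset_Icc_self hcaus
        exact this.mono fun t ht => ht.2.le
      have hint : Integrable (deriv X) (volume.restrict (Ioc (0:ℝ) 1)) := by
        have := hIX 0 1 zero_le_one
        rwa [intervalIntegrable_iff_integrableOn_Ioc_of_le zero_le_one] at this
      have hz : deriv X =ᵐ[volume.restrict (Ioc (0:ℝ) 1)] 0 := by
        rw [← MeasureTheory.integral_eq_zero_iff_of_nonneg_ae hnn hint]
        rw [hIoc]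
        exact h.symm
      have hpos : ∀ᵐ t ∂(volume.restrict (Ioc (0:ℝ) 1)), 0 < deriv X t :=
        (ae_restrict_of_ae_restrict_of_subset Ioc_subset_Icc_self hcaus).mono fun t ht => ht.2
      have hfalse : ∀ᵐ t ∂(volume.restrict (Ioc (0:ℝ) 1)), False := by
        filter_upwards [hz, hpos] with t h1t h2t
        rw [h1t] at h2t; exact lt_irrefl 0 h2t
      rw [ae_iff] at hfalse
      simp only [not_false_eq_true] at hfalse
      have : (volume.restrict (Ioc (0:ℝ) 1)) univ = 0 := by simpa [setOf_true] using hfalse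
      rw [Measure.restrict_apply_univ] at this
      simp [Real.volume_Ioc] at this
  refine ⟨hapos, ?_⟩
  have hYa : ∫ t in (0:ℝ)..1, deriv Y t = b := by rw [lip_ftc hY zero_le_one, hY1, hY0, sub_zero]
  -- transfer the area integral to X, Y
  have h2c : (∫ t in (0:ℝ)..1, (X t * deriv Y t - deriv X t * Y t)) = 2*c := by
    have hcongr : (∫ t in (0:ℝ)..1, ((γ t).1 * deriv (fun s => (γ s).2) t
        - deriv (fun s => (γ s).1) t * (γ t).2))
        = ∫ t in (0:ℝ)..1, (X t * deriv Y t - deriv X t * Y t) := by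
      apply intervalIntegral.integral_congr_ae
      have hne1 : ∀ᵐ (t:ℝ) ∂volume, t ≠ 1 := by
        rw [Filter.eventually_iff, mem_ae_iff]
        have : {t : ℝ | t ≠ 1}ᶜ = {1} := by ext t; simp
        rw [this]; exact measure_singleton 1
      filter_upwards [hne1] with t ht htI
      rw [uIoc_of_le zero_le_one] at htI
      have htIoo : t ∈ Ioo (0:ℝ) 1 := ⟨htI.1, lt_of_le_of_ne htI.2 ht⟩
      have htIcc : t ∈ Icc (0:ℝ) 1 := Ioo_subset_Icc_self htIoo
      rw [← (hder t htIoo).1, ← (hder t htIoo).2, ← hXeq htIcc, ← hYeq htIcc]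
    rw [← hcongr]
    rw [signedArea] at hA
    linarith [hA]
  -- bounds on X, Y over [0,1]
  obtain ⟨MX, hMX⟩ := isCompact_Icc.exists_bound_of_continuousOn
    (s := Icc (0:ℝ) 1) hX.continuous.continuousOn
  obtain ⟨MY, hMY⟩ := isCompact_Icc.exists_bound_of_continuousOn
    (s := Icc (0:ℝ) 1) hY.continuous.continuousOn
  set k : ℝ := ((1*K : NNReal) : ℝ) with hk
  set f1 : ℝ → ℝ := fun t => (deriv X t + deriv Y t) * (X t - Y t) with hf1
  set f2 : ℝ → ℝ := fun t => (X t + Y t) * (deriv X t - deriv Y t) with hf2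
  have hmb : ∀ᵐ t ∂(volume.restrict (Ioc (0:ℝ) 1)), t ∈ Icc (0:ℝ) 1 :=
    (ae_restrict_mem measurableSet_Ioc).mono fun t ht => Ioc_subset_Icc_self ht
  have hXYb : ∀ t ∈ Icc (0:ℝ) 1, |X t - Y t| ≤ |MX| + |MY| ∧ |X t + Y t| ≤ |MX| + |MY| := by
    intro t ht
    have h1' := hMX t ht; have h2' := hMY t ht
    rw [Real.norm_eq_abs] at h1' h2'
    have e1 : |X t| + |Y t| ≤ |MX| + |MY| :=
      add_le_add (h1'.trans (le_abs_self MX)) (h2'.trans (le_abs_self MY))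
    exact ⟨(abs_sub _ _).trans e1, (abs_add_le _ _).trans e1⟩
  have hi1 : IntervalIntegrable f1 volume 0 1 := by
    refine intervalIntegrable_of_bound (C := (k+k)*(|MX|+|MY|)) zero_le_one
      ((hXm.aestronglyMeasurable.add hYm.aestronglyMeasurable).mul
        (hX.continuous.sub hY.continuous).aestronglyMeasurable) ?_
    filter_upwards [hmb] with t ht
    rw [hf1, abs_mul]
    have hd : |deriv X t + deriv Y t| ≤ k + k :=
      (abs_add_le _ _).trans (add_le_add (hXb t) (hYb t))
    calc |deriv X t + deriv Y t| * |X t - Y t| ≤ (k+k) * (|MX|+|MY|) := by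
          exact mul_le_mul hd ((hXYb t ht).1) (abs_nonneg _) (by positivity)
      _ = (k+k) * (|MX|+|MY|) := rfl
  have hi2 : IntervalIntegrable f2 volume 0 1 := by
    refine intervalIntegrable_of_bound (C := (|MX|+|MY|)*(k+k)) zero_le_one
      ((hX.continuous.add hY.continuous).aestronglyMeasurable.mul
        (hXm.aestronglyMeasurable.sub hYm.aestronglyMeasurable)) ?_
    filter_upwards [hmb] with t ht
    rw [hf2, abs_mul]
    have hd : |deriv X t - deriv Y t| ≤ k + k :=
      (abs_sub _ _).trans (add_le_add (hXb t) (hYb t))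
    calc |X t + Y t| * |deriv X t - deriv Y t| ≤ (|MX|+|MY|) * (k+k) := by
          exact mul_le_mul ((hXYb t ht).2) hd (abs_nonneg _) (by positivity)
      _ = (|MX|+|MY|) * (k+k) := rfl
  -- rewrite the area integral
  have hptw : ∀ t, X t * deriv Y t - deriv X t * Y t = f1 t / 2 - f2 t / 2 := by
    intro t; rw [hf1, hf2]; ring
  have h2c' : (∫ t in (0:ℝ)..1, f1 t) / 2 - (∫ t in (0:ℝ)..1, f2 t) / 2 = 2*c := by
    rw [← intervalIntegral.integral_div, ← intervalIntegral.integral_div,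
      ← intervalIntegral.integral_sub (hi1.div_const 2) (hi2.div_const 2)]
    rw [← h2c]
    apply intervalIntegral.integral_congr
    intro t _
    exact (hptw t).symm
  -- bounds on the two integrals
  have hd1 : ∫ t in (0:ℝ)..1, (deriv X t + deriv Y t) = a + b := by
    rw [intervalIntegral.integral_add (hIX 0 1 zero_le_one) (hIY 0 1 zero_le_one), hXa, hYa]
  have hd2 : ∫ t in (0:ℝ)..1, (deriv X t - deriv Y t) = a - b := by
    rw [intervalIntegral.integral_sub (hIX 0 1 zero_le_one) (hIY 0 1 zero_le_one), hXa, hYa]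
  have hI1nn : 0 ≤ ∫ t in (0:ℝ)..1, f1 t := by
    have h' : (∫ t in (0:ℝ)..1, (0:ℝ)) ≤ ∫ t in (0:ℝ)..1, f1 t := by
      refine intervalIntegral.integral_mono_ae_restrict zero_le_one
        intervalIntegrable_const hi1 ?_
      filter_upwards [hcaus, ae_restrict_mem measurableSet_Icc] with t h1t h2t
      have := abs_le.1 h1t.1
      exact mul_nonneg (by linarith [this.1]) ((hbnd t h2t).1)
    simpa using h'
  have hI2nn : 0 ≤ ∫ t in (0:ℝ)..1, f2 t := by
    have h' : (∫ t in (0:ℝ)..1, (0:ℝ)) ≤ ∫ t in (0:ℝ)..1, f2 t := by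
      refine intervalIntegral.integral_mono_ae_restrict zero_le_one
        intervalIntegrable_const hi2 ?_
      filter_upwards [hcaus, ae_restrict_mem measurableSet_Icc] with t h1t h2t
      have := abs_le.1 h1t.1
      exact mul_nonneg ((hbnd t h2t).2.2.1) (by linarith [this.2])
    simpa using h'
  have hI1ub : (∫ t in (0:ℝ)..1, f1 t) ≤ (a+b) * (a-b) := by
    have h' : (∫ t in (0:ℝ)..1, f1 t) ≤ ∫ t in (0:ℝ)..1, (deriv X t + deriv Y t) * (a-b) := by
      refine intervalIntegral.integral_mono_ae_restrict zero_le_one hi1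
        (((hIX 0 1 zero_le_one).add (hIY 0 1 zero_le_one)).mul_const _) ?_
      filter_upwards [hcaus, ae_restrict_mem measurableSet_Icc] with t h1t h2t
      have habs := abs_le.1 h1t.1
      exact mul_le_mul_of_nonneg_left ((hbnd t h2t).2.1) (by linarith [habs.1])
    rwa [intervalIntegral.integral_mul_const, hd1] at h'
  have hI2ub : (∫ t in (0:ℝ)..1, f2 t) ≤ (a+b) * (a-b) := by
    have h' : (∫ t in (0:ℝ)..1, f2 t) ≤ ∫ t in (0:ℝ)..1, (a+b) * (deriv X t - deriv Y t) := by
      refine intervalIntegral.integral_mono_ae_restrict zero_le_one hi2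
        (((hIX 0 1 zero_le_one).sub (hIY 0 1 zero_le_one)).const_mul _) ?_
      filter_upwards [hcaus, ae_restrict_mem measurableSet_Icc] with t h1t h2t
      have habs := abs_le.1 h1t.1
      exact mul_le_mul_of_nonneg_right ((hbnd t h2t).2.2.2) (by linarith [habs.2])
    rwa [intervalIntegral.integral_const_mul, hd2] at h'
  have h4c : |4*c| ≤ (a+b)*(a-b) := by
    rw [abs_le]
    constructor <;> linarith
  have : 4 * |c| = |4*c| := by rw [abs_mul]; norm_num
  nlinarith [h4c, this]

lemma lipschitzWith_affine (m q : ℝ) : LipschitzWith ‖m‖₊ (fun s : ℝ => q + m * s) := by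
  apply LipschitzWith.of_dist_le_mul
  intro x y
  rw [Real.dist_eq, Real.dist_eq]
  have : q + m*x - (q + m*y) = m * (x - y) := by ring
  rw [this, abs_mul]
  simp [Real.norm_eq_abs]

lemma hasDerivAt_affine (m q t : ℝ) : HasDerivAt (fun s : ℝ => q + m * s) m t := by
  simpa using ((hasDerivAt_id t).const_mul m).const_add q

lemma deriv_affine (m q t : ℝ) : deriv (fun s : ℝ => q + m * s) t = m :=
  (hasDerivAt_affine m q t).deriv

lemma construct_zero {a b : ℝ} (ha : 0 < a) (hb : |b| ≤ a) :
    ∃ γ : ℝ → ℝ × ℝ, IsLipCurve γ ∧ IsFDCausal γ ∧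
      γ 0 = (0, 0) ∧ γ 1 = (a, b) ∧ signedArea γ = 0 := by
  refine ⟨fun s => (0 + a * s, 0 + b * s), ?_, ?_, by norm_num, by norm_num, ?_⟩
  · exact ⟨max ‖a‖₊ ‖b‖₊,
      ((lipschitzWith_affine a 0).prodMk (lipschitzWith_affine b 0)).lipschitzOnWith⟩
  · refine Filter.Eventually.of_forall fun t => ?_
    have e1 : (fun s => ((fun s => ((0:ℝ) + a * s, (0:ℝ) + b * s)) s).1) = fun s => 0 + a * s := rfl
    have e2 : (fun s => ((fun s => ((0:ℝ) + a * s, (0:ℝ) + b * s)) s).2) = fun s => 0 + b * s := rfl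
    rw [e1, e2, deriv_affine, deriv_affine]
    exact ⟨hb, ha⟩
  · rw [signedArea]
    have : ∀ t ∈ uIcc (0:ℝ) 1,
        (((fun s => ((0:ℝ) + a * s, (0:ℝ) + b * s)) t).1 *
          deriv (fun s => ((fun s => ((0:ℝ) + a * s, (0:ℝ) + b * s)) s).2) t -
          deriv (fun s => ((fun s => ((0:ℝ) + a * s, (0:ℝ) + b * s)) s).1) t *
          ((fun s => ((0:ℝ) + a * s, (0:ℝ) + b * s)) t).2) = 0 := by
      intro t _
      have e1 : (fun s => ((fun s => ((0:ℝ) + a * s, (0:ℝ) + b * s)) s).1) = fun s => 0 + a * s := rfl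
      have e2 : (fun s => ((fun s => ((0:ℝ) + a * s, (0:ℝ) + b * s)) s).2) = fun s => 0 + b * s := rfl
      rw [e1, e2, deriv_affine, deriv_affine]
      ring
    rw [intervalIntegral.integral_congr this]
    simp

lemma ae_ne_pt (x : ℝ) : ∀ᵐ (t : ℝ) ∂(volume : Measure ℝ), t ≠ x := by
  rw [Filter.eventually_iff, mem_ae_iff]
  have : {t : ℝ | t ≠ x}ᶜ = {x} := by ext t; simp
  rw [this]; exact measure_singleton x

lemma construct_neg {a b c : ℝ} (ha : 0 < a) (hc : c < 0) (hineq : -a^2 + b^2 + 4*|c| ≤ 0) :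
    ∃ γ : ℝ → ℝ × ℝ, IsLipCurve γ ∧ IsFDCausal γ ∧
      γ 0 = (0, 0) ∧ γ 1 = (a, b) ∧ signedArea γ = c := by
  have habs : |c| = -c := abs_of_neg hc
  rw [habs] at hineq
  have hb2 : b^2 < a^2 := by nlinarith
  have hblt : |b| < a := by
    rw [abs_lt]; constructor <;> nlinarith
  have hab : 0 < a - b := by cases abs_lt.1 hblt; linarith
  have habp : 0 < a + b := by cases abs_lt.1 hblt; linarith
  set T : ℝ := (-2*c)/(a-b) with hT
  have hT0 : 0 < T := by apply div_pos <;> linarith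
  have hT2 : 2*T ≤ a + b := by
    have h' : T ≤ (a+b)/2 := by
      rw [hT, div_le_div_iff₀ hab (by norm_num : (0:ℝ) < 2)]
      nlinarith
    linarith
  have hTa : T < a := by linarith
  have haT : 0 < a - T := by linarith
  set KK : ℝ := a*(b-T)/(a-T) with hKK
  set s₀ : ℝ := T/a with hs₀def
  have hs₀pos : 0 < s₀ := div_pos hT0 ha
  have hs₀lt : s₀ < 1 := by rw [hs₀def, div_lt_one ha]; exact hTa
  have idA : a - KK = a*(a-b)/(a-T) := by rw [hKK]; field_simp; ring
  have idB : b - KK = T*(a-b)/(a-T) := by rw [hKK]; field_simp; ring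
  have idC : KK + a = a*(a+b-2*T)/(a-T) := by rw [hKK]; field_simp; ring
  have hKlt : KK < a := by
    have h' : 0 < a*(a-b)/(a-T) := by apply div_pos; nlinarith; linarith
    linarith [idA, h']
  have hKb : KK ≤ b := by
    have h' : 0 < T*(a-b)/(a-T) := by apply div_pos; nlinarith; linarith
    linarith [idB, h']
  have hKge : -a ≤ KK := by
    have h' : 0 ≤ a*(a+b-2*T)/(a-T) := by apply div_nonneg; nlinarith; linarith
    linarith [idC, h']
  have cross : a * s₀ = b + KK * (s₀ - 1) := by
    rw [hs₀def, hKK]; field_simp; ring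
  have h3 : T*(a-b) = -(2*c) := by rw [hT]; field_simp
  have harea : 1/2*(a*(KK-b)*(1-s₀)) = c := by
    have h1 : 1 - s₀ = (a-T)/a := by rw [hs₀def]; field_simp
    have h2 : KK - b = -(T*(a-b)/(a-T)) := by linarith [idB]
    have h4 : a * -(T*(a-b)/(a-T)) * ((a-T)/a) = -(T*(a-b)) := by field_simp
    rw [h2, h1, h4, h3]; ring
  set g1 : ℝ → ℝ := fun s => 0 + a * s with hg1def
  set g2 : ℝ → ℝ := fun s => (b - KK) + KK * s with hg2def
  set f : ℝ → ℝ := fun s => min (g1 s) (g2 s) with hfdef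
  have hdiff : ∀ s, g1 s - g2 s = (a - KK) * (s - s₀) := by
    intro s; rw [hg1def, hg2def]; simp only; linear_combination cross
  have hlt : ∀ t, t < s₀ → g1 t < g2 t := by
    intro t ht
    have h5 := hdiff t
    have h6 : (a - KK) * (t - s₀) < 0 :=
      mul_neg_of_pos_of_neg (by linarith) (by linarith)
    linarith
  have hgt : ∀ t, s₀ < t → g2 t < g1 t := by
    intro t ht
    have h5 := hdiff t
    have h6 : 0 < (a - KK) * (t - s₀) :=
      mul_pos (by linarith) (by linarith)
    linarith
  have hd1 : ∀ t, t < s₀ → deriv f t = a ∧ f t = g1 t := by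
    intro t ht
    have hc1 : ContinuousAt g1 t := ((lipschitzWith_affine a 0).continuous).continuousAt
    have hc2 : ContinuousAt g2 t := ((lipschitzWith_affine KK (b-KK)).continuous).continuousAt
    have hev' : ∀ᶠ s in 𝓝 t, g1 s < g2 s := hc1.tendsto.eventually_lt hc2.tendsto (hlt t ht)
    have hev : f =ᶠ[𝓝 t] g1 := hev'.mono fun s hs => min_eq_left hs.le
    exact ⟨hev.deriv_eq.trans (deriv_affine a 0 t), min_eq_left (hlt t ht).le⟩
  have hd2 : ∀ t, s₀ < t → deriv f t = KK ∧ f t = g2 t := by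
    intro t ht
    have hc1 : ContinuousAt g1 t := ((lipschitzWith_affine a 0).continuous).continuousAt
    have hc2 : ContinuousAt g2 t := ((lipschitzWith_affine KK (b-KK)).continuous).continuousAt
    have hev' : ∀ᶠ s in 𝓝 t, g2 s < g1 s := hc2.tendsto.eventually_lt hc1.tendsto (hgt t ht)
    have hev : f =ᶠ[𝓝 t] g2 := hev'.mono fun s hs => min_eq_right hs.le
    exact ⟨hev.deriv_eq.trans (deriv_affine KK (b-KK) t), min_eq_right (hgt t ht).le⟩
  refine ⟨fun s => (g1 s, f s), ?_, ?_, ?_, ?_, ?_⟩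
  · exact ⟨max ‖a‖₊ (max ‖a‖₊ ‖KK‖₊),
      ((lipschitzWith_affine a 0).prodMk
        ((lipschitzWith_affine a 0).min (lipschitzWith_affine KK (b-KK)))).lipschitzOnWith⟩
  · refine ae_restrict_of_ae ((ae_ne_pt s₀).mono fun t ht => ?_)
    have e1 : (fun s => ((fun s => (g1 s, f s)) s).1) = g1 := rfl
    have e2 : (fun s => ((fun s => (g1 s, f s)) s).2) = f := rfl
    rw [e1, e2, hg1def, deriv_affine]
    rcases lt_or_gt_of_ne ht with h | h
    · rw [(hd1 t h).1, abs_of_pos ha]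
      exact ⟨le_refl _, ha⟩
    · rw [(hd2 t h).1]
      exact ⟨abs_le.2 ⟨hKge, hKlt.le⟩, ha⟩
  · have hf0 : f 0 = 0 := by
      rw [hfdef]; simp only [hg1def, hg2def]
      rw [min_eq_left (by nlinarith [hKb])]
      norm_num
    simp only [Prod.mk.injEq]
    rw [hf0, hg1def]
    norm_num
  · have hf1 : f 1 = b := by
      rw [hfdef]; simp only [hg1def, hg2def]
      rw [min_eq_right (by nlinarith [hblt, abs_le.1 hblt.le])]
      ring
    simp only [Prod.mk.injEq]
    rw [hf1, hg1def]
    norm_num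
  · rw [signedArea]
    have e1 : (fun s => ((fun s => (g1 s, f s)) s).1) = g1 := rfl
    have e2 : (fun s => ((fun s => (g1 s, f s)) s).2) = f := rfl
    have hWc : ∀ t, ((fun s => (g1 s, f s)) t).1 * deriv (fun s => ((fun s => (g1 s, f s)) s).2) t
        - deriv (fun s => ((fun s => (g1 s, f s)) s).1) t * ((fun s => (g1 s, f s)) t).2
        = g1 t * deriv f t - a * f t := by
      intro t
      rw [e1, e2, hg1def, deriv_affine]
    have hW1 : ∀ᵐ (t:ℝ) ∂volume, t ∈ Ι (0:ℝ) s₀ → g1 t * deriv f t - a * f t = 0 := by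
      filter_upwards [ae_ne_pt s₀] with t ht htI
      rw [uIoc_of_le hs₀pos.le] at htI
      have hlt' : t < s₀ := lt_of_le_of_ne htI.2 ht
      rw [(hd1 t hlt').1, (hd1 t hlt').2]
      ring
    have hW2 : ∀ᵐ (t:ℝ) ∂volume, t ∈ Ι s₀ (1:ℝ) → g1 t * deriv f t - a * f t
        = a * (KK - b) := by
      refine Filter.Eventually.of_forall fun t htI => ?_
      rw [uIoc_of_le hs₀lt.le] at htI
      rw [(hd2 t htI.1).1, (hd2 t htI.1).2, hg1def, hg2def]
      ring
    have hi1 : IntervalIntegrable (fun t => g1 t * deriv f t - a * f t) volume 0 s₀ := by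
      rw [intervalIntegrable_iff_integrableOn_Ioc_of_le hs₀pos.le]
      refine (integrable_zero _ _ _).congr ?_
      have h' : ∀ᵐ (t:ℝ) ∂(volume.restrict (Ioc 0 s₀)), t ∈ Ι (0:ℝ) s₀ → g1 t * deriv f t - a * f t = 0 := ae_restrict_of_ae hW1
      filter_upwards [h', ae_restrict_mem measurableSet_Ioc] with t h1t h2t
      exact (h1t (by rwa [uIoc_of_le hs₀pos.le])).symm
    have hi2 : IntervalIntegrable (fun t => g1 t * deriv f t - a * f t) volume s₀ 1 := by
      rw [intervalIntegrable_iff_integrableOn_Ioc_of_le hs₀lt.le]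
      refine (integrable_const (a * (KK - b))).congr ?_
      have h' : ∀ᵐ (t:ℝ) ∂(volume.restrict (Ioc s₀ 1)), t ∈ Ι s₀ (1:ℝ) → g1 t * deriv f t - a * f t = a * (KK - b) := ae_restrict_of_ae hW2
      filter_upwards [h', ae_restrict_mem measurableSet_Ioc] with t h1t h2t
      exact (h1t (by rwa [uIoc_of_le hs₀lt.le])).symm
    have hsum := intervalIntegral.integral_add_adjacent_intervals hi1 hi2
    have hv1 : ∫ t in (0:ℝ)..s₀, (g1 t * deriv f t - a * f t) = 0 := by
      rw [intervalIntegral.integral_congr_ae hW1]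
      simp
    have hv2 : ∫ t in s₀..(1:ℝ), (g1 t * deriv f t - a * f t) = a * (KK - b) * (1 - s₀) := by
      rw [intervalIntegral.integral_congr_ae hW2, intervalIntegral.integral_const]
      rw [smul_eq_mul]; ring
    have : (∫ t in (0:ℝ)..1, (g1 t * deriv f t - a * f t)) = a * (KK - b) * (1 - s₀) := by
      rw [← hsum, hv1, hv2]; ring
    calc (1/2) * ∫ t in (0:ℝ)..1,
          (((fun s => (g1 s, f s)) t).1 * deriv (fun s => ((fun s => (g1 s, f s)) s).2) t
          - deriv (fun s => ((fun s => (g1 s, f s)) s).1) t * ((fun s => (g1 s, f s)) t).2)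
        = (1/2) * ∫ t in (0:ℝ)..1, (g1 t * deriv f t - a * f t) := by
          rw [intervalIntegral.integral_congr (fun t _ => hWc t)]
      _ = (1/2) * (a * (KK - b) * (1 - s₀)) := by rw [this]
      _ = c := by
          have hKb' : KK - b = -(b - KK) := by ring
          linarith [harea]

lemma reflect_curve {a b c : ℝ} {γ : ℝ → ℝ × ℝ} (hL : IsLipCurve γ) (hC : IsFDCausal γ)
    (h0 : γ 0 = (0,0)) (h1 : γ 1 = (a,b)) (hA : signedArea γ = c) :
    ∃ γ' : ℝ → ℝ × ℝ, IsLipCurve γ' ∧ IsFDCausal γ' ∧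
      γ' 0 = (0, 0) ∧ γ' 1 = (a, -b) ∧ signedArea γ' = -c := by
  refine ⟨fun s => ((γ s).1, -(γ s).2), ?_, ?_, ?_, ?_, ?_⟩
  · obtain ⟨K, hK⟩ := hL
    refine ⟨K, fun x hx y hy => ?_⟩
    calc edist (((γ x).1, -(γ x).2) : ℝ × ℝ) (((γ y).1, -(γ y).2) : ℝ × ℝ)
        = edist (γ x) (γ y) := by rw [Prod.edist_eq, Prod.edist_eq, edist_neg_neg]
      _ ≤ K * edist x y := hK hx hy
  · refine hC.mono fun t ht => ?_
    rw [show (fun s => ((fun s => ((γ s).1, -(γ s).2)) s).2) = fun s => -((γ s).2) from rfl,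
        show (fun s => ((fun s => ((γ s).1, -(γ s).2)) s).1) = fun s => (γ s).1 from rfl,
        deriv.fun_neg, abs_neg]
    exact ht
  · simp [h0]
  · simp [h1]
  · rw [signedArea]
    have hneg : ∀ t, ((fun s => ((γ s).1, -(γ s).2)) t).1 *
        deriv (fun s => ((fun s => ((γ s).1, -(γ s).2)) s).2) t -
        deriv (fun s => ((fun s => ((γ s).1, -(γ s).2)) s).1) t *
        ((fun s => ((γ s).1, -(γ s).2)) t).2
        = -((γ t).1 * deriv (fun s => (γ s).2) t - deriv (fun s => (γ s).1) t * (γ t).2) := by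
      intro t
      rw [show (fun s => ((fun s => ((γ s).1, -(γ s).2)) s).2) = fun s => -((γ s).2) from rfl,
          show (fun s => ((fun s => ((γ s).1, -(γ s).2)) s).1) = fun s => (γ s).1 from rfl,
          deriv.fun_neg]
      simp only
      ring
    rw [intervalIntegral.integral_congr (fun t _ => hneg t), intervalIntegral.integral_neg]
    rw [signedArea] at hA
    linarith

/-- there exists a future-directed causal Lipschitz curve from the
origin to `(a,b)` enclosing signed area `c` iff `a > 0` and `-a² + b² + 4|c| ≤ 0`. -/
theorem exists_causal_curve_iff (a b c : ℝ) :
    (∃ γ : ℝ → ℝ × ℝ, IsLipCurve γ ∧ IsFDCausal γ ∧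
      γ 0 = (0, 0) ∧ γ 1 = (a, b) ∧ signedArea γ = c) ↔
    (0 < a ∧ -a^2 + b^2 + 4 * |c| ≤ 0) := by
  constructor
  · rintro ⟨γ, hL, hC, h0, h1, hA⟩
    exact forward_dir hL hC h0 h1 hA
  · rintro ⟨ha, hineq⟩
    rcases lt_trichotomy c 0 with hc | hc | hc
    · exact construct_neg ha hc hineq
    · subst hc
      have hb : |b| ≤ a := by
        rw [abs_le]; constructor <;> nlinarith [abs_nonneg (0:ℝ)]
      obtain ⟨γ, hL, hC, h0, h1, hA⟩ := construct_zero ha hb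
      exact ⟨γ, hL, hC, h0, h1, hA⟩
    · have hineq' : -a^2 + (-b)^2 + 4*|(-c)| ≤ 0 := by
        rw [abs_neg, neg_pow]
        simpa using hineq
      obtain ⟨γ, hL, hC, h0, h1, hA⟩ := construct_neg ha (by linarith : -c < 0) hineq'
      obtain ⟨γ', hL', hC', h0', h1', hA'⟩ := reflect_curve hL hC h0 h1 hA
      refine ⟨γ', hL', hC', h0', ?_, by rw [hA']; ring⟩
      rw [h1']; simp
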